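/- Let H be a Banach space isomorphic to its dual, i.e., there exists a linear isomorphism τ : H → H* which is bounded with bounded inverse. Suppose H is a closed subspace of a Banach space X via an isometric embedding j, and the bilinear form B(x,y) := (τ x)(y) on H × H extends to a continuous bilinear form on X × X. Then the range of j is complemented in X. -/

import Mathlib

open NormedSpace

/-- If `H` is isomorphic to its dual via `τ`, `H` embeds isometrically in `X` via `j`,
and the bilinear form `B(x,y) = (τ x)(y)` extends to a continuous bilinear form on `X × X`,
then the range of `j` is complemented in `X`. -/
theorem complemented_of_selfdual_bilinear_extension
    {H X : Type*} [NormedAddCommGroup H] [NormedSpace ℝ H] [CompleteSpace H]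
    [NormedAddCommGroup X] [NormedSpace ℝ X] [CompleteSpace X]
    (τ : H ≃L[ℝ] StrongDual ℝ H)
    (j : H →L[ℝ] X) (hj : ∀ x, ‖j x‖ = ‖x‖) (hrange : IsClosed (Set.range j))
    (Bext : X →L[ℝ] X →L[ℝ] ℝ)
    (hBext : ∀ x y : H, Bext (j x) (j y) = (τ x) y) :
    ∃ P : X →L[ℝ] X, Set.range P = Set.range j ∧ ∀ z ∈ Set.range j, P z = z := by
  -- φ x = (y ↦ Bext x (j y)) : Dual of H
  set φ : X →L[ℝ] StrongDual ℝ H := ((Bext.flip.comp j).flip) with hφ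
  set P : X →L[ℝ] X := j.comp ((τ.symm : StrongDual ℝ H →L[ℝ] H).comp φ) with hP
  have key : ∀ x : H, P (j x) = j x := by
    intro x
    have hφx : φ (j x) = τ x := by
      ext y
      simp [hφ, hBext]
    simp [hP, hφx]
  refine ⟨P, ?_, ?_⟩
  · apply le_antisymm
    · rintro _ ⟨z, rfl⟩
      exact ⟨τ.symm (φ z), rfl⟩
    · rintro _ ⟨x, rfl⟩
      exact ⟨j x, key x⟩
  · rintro _ ⟨x, rfl⟩
    exact key x
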